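/- Let C_1, C_2 ⊆ [0,1]^2 be nonempty compact max-min convex sets with C_1 ∩ C_2 = ∅. Then there exists a box B = [p_1,q_1]×[p_2,q_2] ⊆ [0,1]^2 and a choice i ∈ {1,2} such that C_i ⊆ B and B ∩ C_{3-i} = ∅. -/
import Mathlib

open unitInterval

noncomputable def segPt {n : ℕ} (α β : I) (x y : Fin n → I) : Fin n → I :=
  fun i => max (min α (x i)) (min β (y i))

def MaxMinConvex {n : ℕ} (C : Set (Fin n → I)) : Prop :=
  ∀ x ∈ C, ∀ y ∈ C, ∀ α β : I, max α β = 1 → segPt α β x y ∈ C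

def maxMinSegment {n : ℕ} (x y : Fin n → I) : Set (Fin n → I) :=
  {z | ∃ α β : I, max α β = 1 ∧ z = segPt α β x y}

def Box2 (p q : Fin 2 → I) : Set (Fin 2 → I) :=
  {z | ∀ i, p i ≤ z i ∧ z i ≤ q i}

lemma I_le_one (x : I) : x ≤ (1 : I) := by
  change (x : ℝ) ≤ ((1 : I) : ℝ)
  simp [unitInterval.le_one x]

lemma I_min_one (x : I) : min (1 : I) x = x := min_eq_right (I_le_one x)

/-- The key algebraic lemma: a common point of the two sets. -/
lemma key_lemma {C1 C2 : Set (Fin 2 → I)}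
    (h1conv : MaxMinConvex C1) (h2conv : MaxMinConvex C2)
    (i j : Fin 2) (hcov : ∀ k : Fin 2, k = i ∨ k = j)
    (b q y s : Fin 2 → I)
    (hb : b ∈ C1) (hq : q ∈ C1) (hy : y ∈ C2) (hs : s ∈ C2)
    (hbqi : b i ≤ q i) (hbyj : b j ≤ y j)
    (hyi : y i ≤ q i) (hyj : y j ≤ q j)
    (hqij : q i ≤ q j) (hqsi : q i ≤ s i) (hqsj : q i ≤ s j) :
    ∃ z, z ∈ C1 ∧ z ∈ C2 := by
  refine ⟨segPt 1 (max (q i) (y j)) b q, h1conv b hb q hq 1 _ (max_eq_left (I_le_one _)), ?_⟩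
  have hEq : segPt 1 (max (q i) (y j)) b q = segPt 1 (q i) y s := by
    funext k
    rcases hcov k with rfl | rfl
    · show max (min 1 (b k)) (min (max (q k) (y j)) (q k))
          = max (min 1 (y k)) (min (q k) (s k))
      rw [I_min_one, I_min_one, min_eq_right (le_max_left _ _), min_eq_left hqsi,
        max_eq_right hbqi, max_eq_right hyi]
    · show max (min 1 (b k)) (min (max (q i) (y k)) (q k))
          = max (min 1 (y k)) (min (q i) (s k))
      rw [I_min_one, I_min_one, min_eq_left (max_le hqij hyj), min_eq_left hqsj,
        max_eq_right (le_trans hbyj (le_max_right _ _)), max_comm (y k) (q i)]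
  rw [hEq]
  exact h2conv y hy s hs 1 _ (max_eq_left (I_le_one _))

/-- Half of the dichotomy: if the minimum of the top of C1 is small enough,
the bounding box of C1 is disjoint from C2. -/
lemma half_lemma {C1 C2 : Set (Fin 2 → I)}
    (h1conv : MaxMinConvex C1) (h2conv : MaxMinConvex C2)
    (hdisj : ∀ z, z ∈ C1 → z ∈ C2 → False)
    (q s : Fin 2 → I) (hq : q ∈ C1) (hs : s ∈ C2)
    (htop1 : ∀ c ∈ C1, ∀ k, c k ≤ q k) (htop2 : ∀ c ∈ C2, ∀ k, c k ≤ s k)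
    (b0 b1 : Fin 2 → I) (hb0 : b0 ∈ C1) (hb1 : b1 ∈ C1)
    (hmin0 : ∀ c ∈ C1, b0 0 ≤ c 0) (hmin1 : ∀ c ∈ C1, b1 1 ≤ c 1)
    (hmm : min (q 0) (q 1) ≤ min (s 0) (s 1)) :
    ∃ p q' : Fin 2 → I, (∀ i, p i ≤ q' i) ∧ C1 ⊆ Box2 p q' ∧ Box2 p q' ∩ C2 = ∅ := by
  classical
  set p : Fin 2 → I := fun k => if k = 0 then b0 0 else b1 1 with hp
  have hpc : ∀ c ∈ C1, ∀ k, p k ≤ c k := by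
    intro c hc k
    fin_cases k
    · simpa [hp] using hmin0 c hc
    · simpa [hp] using hmin1 c hc
  refine ⟨p, q, fun k => hpc q hq k, fun c hc k => ⟨hpc c hc k, htop1 c hc k⟩, ?_⟩
  rw [Set.eq_empty_iff_forall_notMem]
  rintro y ⟨hybox, hy2⟩
  have hys := htop2 y hy2
  rcases le_total (q 0) (q 1) with h01 | h10
  · -- min is q 0
    have hq0 : q 0 ≤ min (s 0) (s 1) := le_trans (le_of_eq (min_eq_left h01).symm) hmm
    obtain ⟨z, hz1, hz2⟩ := key_lemma h1conv h2conv 0 1 (by decide) b1 q y s hb1 hq hy2 hs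
      (htop1 b1 hb1 0) (by simpa [hp] using (hybox 1).1)
      (hybox 0).2 (hybox 1).2 h01
      (le_trans hq0 (min_le_left _ _)) (le_trans hq0 (min_le_right _ _))
    exact hdisj z hz1 hz2
  · -- min is q 1
    have hq1 : q 1 ≤ min (s 0) (s 1) := le_trans (le_of_eq (min_eq_right h10).symm) hmm
    obtain ⟨z, hz1, hz2⟩ := key_lemma h1conv h2conv 1 0 (by decide) b0 q y s hb0 hq hy2 hs
      (htop1 b0 hb0 1) (by simpa [hp] using (hybox 0).1)
      (hybox 1).2 (hybox 0).2 h10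
      (le_trans hq1 (min_le_right _ _)) (le_trans hq1 (min_le_left _ _))
    exact hdisj z hz1 hz2

lemma get_top {C : Set (Fin 2 → I)} (hne : C.Nonempty) (hc : IsCompact C)
    (hconv : MaxMinConvex C) : ∃ q ∈ C, ∀ c ∈ C, ∀ k, c k ≤ q k := by
  obtain ⟨c0, hc0, hmax0⟩ := hc.exists_isMaxOn hne (continuous_apply (0 : Fin 2)).continuousOn
  obtain ⟨c1, hc1, hmax1⟩ := hc.exists_isMaxOn hne (continuous_apply (1 : Fin 2)).continuousOn
  refine ⟨segPt 1 1 c0 c1, hconv c0 hc0 c1 hc1 1 1 (max_self 1), ?_⟩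
  intro c hc' k
  fin_cases k
  · calc c 0 ≤ c0 0 := hmax0 hc'
      _ ≤ _ := by simp [segPt, I_min_one]
  · calc c 1 ≤ c1 1 := hmax1 hc'
      _ ≤ _ := by simp [segPt, I_min_one]

theorem stmt17 (C1 C2 : Set (Fin 2 → I))
    (h1ne : C1.Nonempty) (h2ne : C2.Nonempty)
    (h1c : IsCompact C1) (h2c : IsCompact C2)
    (h1conv : MaxMinConvex C1) (h2conv : MaxMinConvex C2)
    (hdisj : C1 ∩ C2 = ∅) :
    (∃ p q : Fin 2 → I, (∀ i, p i ≤ q i) ∧ C1 ⊆ Box2 p q ∧ Box2 p q ∩ C2 = ∅) ∨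
    (∃ p q : Fin 2 → I, (∀ i, p i ≤ q i) ∧ C2 ⊆ Box2 p q ∧ Box2 p q ∩ C1 = ∅) := by
  have hdisj' : ∀ z, z ∈ C1 → z ∈ C2 → False := by
    intro z hz1 hz2
    have : z ∈ C1 ∩ C2 := ⟨hz1, hz2⟩
    rw [hdisj] at this
    exact this
  obtain ⟨q, hq, htop1⟩ := get_top h1ne h1c h1conv
  obtain ⟨s, hs, htop2⟩ := get_top h2ne h2c h2conv
  obtain ⟨a0, ha0, hmin0⟩ := h1c.exists_isMinOn h1ne (continuous_apply (0 : Fin 2)).continuousOn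
  obtain ⟨a1, ha1, hmin1⟩ := h1c.exists_isMinOn h1ne (continuous_apply (1 : Fin 2)).continuousOn
  obtain ⟨b0, hb0, hmin0'⟩ := h2c.exists_isMinOn h2ne (continuous_apply (0 : Fin 2)).continuousOn
  obtain ⟨b1, hb1, hmin1'⟩ := h2c.exists_isMinOn h2ne (continuous_apply (1 : Fin 2)).continuousOn
  rcases le_total (min (q 0) (q 1)) (min (s 0) (s 1)) with hmm | hmm
  · exact Or.inl (half_lemma h1conv h2conv hdisj' q s hq hs htop1 htop2 a0 a1 ha0 ha1
      (fun c hc => hmin0 hc) (fun c hc => hmin1 hc) hmm)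
  · exact Or.inr (half_lemma h2conv h1conv (fun z h2 h1 => hdisj' z h1 h2) s q hs hq htop2 htop1
      b0 b1 hb0 hb1 (fun c hc => hmin0' hc) (fun c hc => hmin1' hc) hmm)
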